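/- If F > T_a, the steady-state solution U^S is strictly decreasing on [0, L], and satisfies T_a < U^S(x) ≤ F for all x in [0, L]. -/

import Mathlib

theorem stmt_5 (k₁ k₂ h l L Ta F : ℝ)
    (hk₁ : 0 < k₁) (hk₂ : 0 < k₂) (hh : 0 < h) (hl : 0 < l) (hlL : l < L)
    (hTa : 0 < Ta) (hF : Ta < F)
    (Q μ : ℝ) (hQ : Q = (F - Ta) * h)
    (hμ : μ = k₁ * k₂ / (k₁ * k₂ + k₁ * h * L + (k₂ - k₁) * h * l))
    (Us : ℝ → ℝ)
    (hUs : Us = fun x => if x ≤ l then F - Q * μ * x / k₁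
                          else F - Q * μ * ((x - l) / k₂ + l / k₁)) :
    StrictAntiOn Us (Set.Icc 0 L) ∧
    ∀ x ∈ Set.Icc 0 L, Ta < Us x ∧ Us x ≤ F := by
  subst hUs hQ hμ
  set D := k₁ * k₂ + k₁ * h * L + (k₂ - k₁) * h * l with hD
  have hDpos : 0 < D := by rw [hD]; nlinarith [mul_pos hk₁ hk₂, mul_pos (mul_pos hk₁ hh) (sub_pos.mpr hlL), mul_pos (mul_pos hk₂ hh) hl]
  have hFT : 0 < F - Ta := by linarith
  set A := (F - Ta) * h * (k₁ * k₂ / D) with hA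
  have hApos : 0 < A := by rw [hA]; positivity
  have key : A * ((L - l)/k₂ + l/k₁) = (F - Ta) * h * (k₁*(L-l) + k₂*l) / D := by
    rw [hA]; field_simp
  have hbound : A * ((L - l)/k₂ + l/k₁) < F - Ta := by
    rw [key, div_lt_iff₀ hDpos, hD]
    nlinarith [mul_pos hk₁ hk₂]
  have hanti : StrictAntiOn (fun x => if x ≤ l then F - A * x / k₁
      else F - A * ((x - l) / k₂ + l / k₁)) (Set.Icc 0 L) := by
    intro x hx y hy hxy
    simp only
    by_cases hxl : x ≤ l <;> by_cases hyl : y ≤ l <;>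
      simp only [hxl, hyl, if_true, if_false]
    · have h1 : A * x / k₁ < A * y / k₁ :=
        (div_lt_div_iff_of_pos_right hk₁).mpr (by nlinarith)
      linarith
    · have hly : l < y := lt_of_not_ge hyl
      have h1 : A * x / k₁ ≤ A * l / k₁ :=
        (div_le_div_iff_of_pos_right hk₁).mpr (by nlinarith)
      have h2 : 0 < A * ((y - l) / k₂) :=
        mul_pos hApos (div_pos (by linarith) hk₂)
      have h3 : A * ((y - l) / k₂ + l / k₁) = A * ((y - l) / k₂) + A * l / k₁ := by ring
      linarith
    · exact absurd (hxy.le.trans hyl) hxl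
    · have h1 : A * ((x - l) / k₂) < A * ((y - l) / k₂) := by
        apply mul_lt_mul_of_pos_left _ hApos
        exact (div_lt_div_iff_of_pos_right hk₂).mpr (by linarith)
      have h3 : ∀ z : ℝ, A * ((z - l) / k₂ + l / k₁) = A * ((z - l) / k₂) + A * l / k₁ := by
        intro z; ring
      rw [h3, h3] at *
      linarith
  refine ⟨hanti, fun x hx => ?_⟩
  obtain ⟨hx0, hxL⟩ := hx
  constructor
  · have hmono := hanti.antitoneOn ⟨hx0, hxL⟩ ⟨by linarith, le_refl L⟩ hxL
    have hLl : ¬ (L ≤ l) := not_le.mpr hlL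
    simp only [hLl, if_false] at hmono
    linarith
  · by_cases hxl : x ≤ l <;> simp only [hxl, if_true, if_false]
    · have : 0 ≤ A * x / k₁ := by positivity
      linarith
    · have hlx : l < x := lt_of_not_ge hxl
      have : 0 ≤ A * ((x - l) / k₂ + l / k₁) := by
        have h1 : 0 ≤ (x - l) / k₂ := div_nonneg (by linarith) hk₂.le
        have h2 : 0 ≤ l / k₁ := by positivity
        nlinarith
      linarith
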